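/- arXiv:1609.00831 — 2 statements merged into one kernel-verified Lean document; each statement's English description precedes it below -/
import Mathlib

section
/- Let R_0 be the largest real root of R^3 - 5R^2 + 3R + 3 = 0. For c = c_T = 2(R_0+1)/(R_0^2 - 2R_0 - 1) and for all real a with 0 < a < R_0/(1+R_0), it holds that (c+2)/(c·a) + 1 ≥ R_0. -/
theorem second_term_bound (R0 : ℝ)
    (hroot : R0 ^ 3 - 5 * R0 ^ 2 + 3 * R0 + 3 = 0)
    (hmax : ∀ x : ℝ, x ^ 3 - 5 * x ^ 2 + 3 * x + 3 = 0 → x ≤ R0) :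
    ∀ a : ℝ, 0 < a → a < R0 / (1 + R0) →
      (2 * (R0 + 1) / (R0 ^ 2 - 2 * R0 - 1) + 2) /
        (2 * (R0 + 1) / (R0 ^ 2 - 2 * R0 - 1) * a) + 1 ≥ R0 := by
  -- First, R0 > 4 via a root in (4,5)
  have hR4 : (4 : ℝ) < R0 := by
    have hcont : ContinuousOn (fun x : ℝ => x ^ 3 - 5 * x ^ 2 + 3 * x + 3) (Set.Icc 4 5) :=
      (continuous_id.pow 3 |>.sub ((continuous_const.mul (continuous_id.pow 2)))
        |>.add (continuous_const.mul continuous_id) |>.add continuous_const).continuousOn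
    have h0 : (0 : ℝ) ∈ Set.Icc ((fun x : ℝ => x ^ 3 - 5 * x ^ 2 + 3 * x + 3) 4)
        ((fun x : ℝ => x ^ 3 - 5 * x ^ 2 + 3 * x + 3) 5) := by
      constructor <;> norm_num
    obtain ⟨r, hr, hfr⟩ := intermediate_value_Icc (by norm_num : (4:ℝ) ≤ 5) hcont h0
    have hrR : r ≤ R0 := hmax r hfr
    have : r ≠ 4 := by
      intro h; rw [h] at hfr; norm_num at hfr
    have : 4 < r := lt_of_le_of_ne hr.1 (Ne.symm this)
    linarith
  intro a ha haR
  set D : ℝ := R0 ^ 2 - 2 * R0 - 1 with hD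
  have hDpos : 0 < D := by nlinarith
  have hR1 : 0 < 1 + R0 := by linarith
  set c : ℝ := 2 * (R0 + 1) / D with hc
  have hcpos : 0 < c := by positivity
  have hca : 0 < c * a := by positivity
  have key : (R0 - 1) * (c * a) ≤ c + 2 := by
    have h1 : a ≤ R0 / (1 + R0) := le_of_lt haR
    have h2 : (R0 - 1) * (c * a) ≤ (R0 - 1) * (c * (R0 / (1 + R0)))  := by
      apply mul_le_mul_of_nonneg_left _ (by linarith)
      exact mul_le_mul_of_nonneg_left h1 (le_of_lt hcpos)
    have h3 : (R0 - 1) * (c * (R0 / (1 + R0))) = c + 2 := by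
      rw [hc, hD]
      have hD' : R0 * (R0 - 2) - 1 ≠ 0 := ne_of_gt (by nlinarith [hDpos, hD])
      field_simp
      ring
    linarith
  have : R0 - 1 ≤ (c + 2) / (c * a) := by
    rw [le_div_iff₀ hca]
    linarith [key]
  linarith
end

section
/- Let (X,d) be a metric space, D > 0, and let dlm, op0, op1, op2 ∈ X and R1, R2 nonempty finite multisets in X. Write [u,v] = D·d(u,v) and [v,S] = (D/|S|)·∑_{x∈S} d(v,x). Suppose g(v) := [dlm,v] + 2[v,R1] + [v,R2] satisfies g(v_g) ≤ 1.5·[dlm,R2] for some minimizer v_g of g. Then g(v_g) ≤ 0.5·([dlm,op0] + [op0,R1] + [R1,op0] + [op0,op1] + [op1,op2] + [op2,R2]) + 0.75·([dlm,op0] + [op0,op1] + [op1,R2]). -/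
theorem short_phase_g_bound {X : Type*} [MetricSpace X] (D : ℝ) (hD : 0 < D)
    (dlm op0 op1 op2 : X) (R1 R2 : Multiset X) (hR1 : R1 ≠ 0) (hR2 : R2 ≠ 0)
    (bk : X → Multiset X → ℝ)
    (hbk : ∀ v S, bk v S = (D / (Multiset.card S : ℝ)) * (S.map (fun x => dist v x)).sum)
    (g : X → ℝ)
    (hg : ∀ v, g v = D * dist dlm v + 2 * bk v R1 + bk v R2)
    (vg : X) (hmin : ∀ v, g vg ≤ g v)
    (hshort : g vg ≤ 1.5 * bk dlm R2) :
    g vg ≤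
      0.5 * (D * dist dlm op0 + bk op0 R1 + bk op0 R1 + D * dist op0 op1 +
        D * dist op1 op2 + bk op2 R2) +
      0.75 * (D * dist dlm op0 + D * dist op0 op1 + bk op1 R2) := by
  have key : ∀ (u v : X) (S : Multiset X), S ≠ 0 → bk u S ≤ D * dist u v + bk v S := by
    intro u v S hS
    rw [hbk, hbk]
    have hc : (0:ℝ) < (Multiset.card S : ℝ) := by
      exact_mod_cast Multiset.card_pos.mpr hS
    have h1 : (S.map (fun x => dist u x)).sum ≤
        (S.map (fun x => dist u v + dist v x)).sum := by
      apply Multiset.sum_map_le_sum_map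
      intro x _
      exact dist_triangle u v x
    have h2 : (S.map (fun x => dist u v + dist v x)).sum =
        (Multiset.card S : ℝ) * dist u v + (S.map (fun x => dist v x)).sum := by
      rw [Multiset.sum_map_add]
      congr 1
      simp [Multiset.map_const', Multiset.sum_replicate, mul_comm]
    have hDc : 0 < D / (Multiset.card S : ℝ) := div_pos hD hc
    calc D / (Multiset.card S : ℝ) * (S.map (fun x => dist u x)).sum
        ≤ D / (Multiset.card S : ℝ) * ((Multiset.card S : ℝ) * dist u v +
          (S.map (fun x => dist v x)).sum) := by
          rw [← h2]; exact mul_le_mul_of_nonneg_left h1 hDc.le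
      _ = D * dist u v + D / (Multiset.card S : ℝ) * (S.map (fun x => dist v x)).sum := by
          field_simp
  have h01 : bk op0 R2 ≤ D * dist op0 op1 + bk op1 R2 := key op0 op1 R2 hR2
  have h12 : bk op1 R2 ≤ D * dist op1 op2 + bk op2 R2 := key op1 op2 R2 hR2
  have hd0 : bk dlm R2 ≤ D * dist dlm op0 + bk op0 R2 := key dlm op0 R2 hR2
  have hd01 : bk op0 R2 ≤ D * dist op0 op1 + bk op1 R2 := h01
  have hm := hmin op0
  rw [hg op0] at hm
  nlinarith [hD.le, dist_nonneg (x := dlm) (y := op0), dist_nonneg (x := op0) (y := op1)]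
end
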